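/- Among all choices of nonnegative integer run counts n_1,…,n_K with Σ_{i=1}^K n_i = N, the variance E[(û_{S_N} − u)²] of the (always unbiased) performance estimator is minimized by any choice satisfying n_i ∈ {⌊N/K⌋, ⌈N/K⌉} for all i ∈ {1,…,K}; that is, for any such balanced choice (n_i) and any other choice (m_i) of nonnegative integers with Σ_{i=1}^K m_i = N, the variance of the estimator using (n_i) is at most the variance of the estimator using (m_i). -/

import Mathlib

open MeasureTheory

/-- The sampling measure: `K` training instances drawn i.i.d. from `D` and
`N` random seeds drawn i.i.d. from `G`, independently of the instances. -/
noncomputable def sampleMeasure {Z V : Type*} [MeasurableSpace Z] [MeasurableSpace V]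
    (D : Measure Z) (G : Measure V) (K N : ℕ) :
    Measure ((Fin K → Z) × (Fin N → V)) :=
  (Measure.pi fun _ : Fin K => D).prod (Measure.pi fun _ : Fin N => G)

/-- True performance `u = E_{z∼D, v∼G}[f(z,v)]`. -/
noncomputable def truePerf {Z V : Type*} [MeasurableSpace Z] [MeasurableSpace V]
    (D : Measure Z) (G : Measure V) (f : Z × V → ℝ) : ℝ :=
  ∫ zv, f zv ∂(D.prod G)

/-- The number `n_i` of runs performed on the `i`-th training instance, for an
assignment `a : Fin N → Fin K` of each of the `N` runs to a training instance. -/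
def nCount {K N : ℕ} (a : Fin N → Fin K) (i : Fin K) : ℕ :=
  (Finset.univ.filter fun t => a t = i).card

section AuxHelpers

variable {ι α : Type*} [Fintype ι] [DecidableEq ι] [MeasurableSpace α]
  (μ : Measure α) [IsProbabilityMeasure μ]

lemma my_integral_pi_eval (φ : α → ℝ) (i : ι) :
    ∫ x : ι → α, φ (x i) ∂(Measure.pi fun _ : ι => μ) = ∫ y, φ y ∂μ := by
  letI : MeasureSpace α := ⟨μ⟩
  haveI : SigmaFinite (volume : Measure α) := inferInstanceAs (SigmaFinite μ)
  have hvol : (Measure.pi fun _ : ι => μ) = (volume : Measure (ι → α)) := rfl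
  set F : ι → α → ℝ := Function.update (fun _ : ι => (fun _ : α => (1:ℝ))) i φ with hFdef
  have hFi : F i = φ := Function.update_self _ _ _
  have hFo : ∀ r, r ≠ i → F r = fun _ => (1:ℝ) := fun r hr => Function.update_of_ne hr _ _
  have h1 : ∀ x : ι → α, φ (x i) = ∏ j, F j (x j) := by
    intro x
    rw [Finset.prod_eq_single i (fun j _ hj => by rw [hFo j hj]) (by simp), hFi]
  calc ∫ x : ι → α, φ (x i) ∂(Measure.pi fun _ : ι => μ)
      = ∫ x : ι → α, ∏ j, F j (x j) := by
        rw [hvol]; exact integral_congr_ae (Filter.Eventually.of_forall h1)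
    _ = ∏ j, ∫ y, F j y := integral_fintype_prod_eq_prod F
    _ = ∫ y, φ y ∂μ := by
        rw [Finset.prod_eq_single i (fun j _ hj => by rw [hFo j hj]; simp) (by simp), hFi]
        rfl

lemma my_integral_pi_eval_two (φ ψ : α → ℝ) {i j : ι} (hij : i ≠ j) :
    ∫ x : ι → α, φ (x i) * ψ (x j) ∂(Measure.pi fun _ : ι => μ)
      = (∫ y, φ y ∂μ) * ∫ y, ψ y ∂μ := by
  letI : MeasureSpace α := ⟨μ⟩
  haveI : SigmaFinite (volume : Measure α) := inferInstanceAs (SigmaFinite μ)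
  have hvol : (Measure.pi fun _ : ι => μ) = (volume : Measure (ι → α)) := rfl
  set F : ι → α → ℝ :=
    Function.update (Function.update (fun _ : ι => (fun _ : α => (1:ℝ))) i φ) j ψ with hFdef
  have hFi : F i = φ := by
    rw [hFdef, Function.update_of_ne hij, Function.update_self]
  have hFj : F j = ψ := Function.update_self _ _ _
  have hFo : ∀ r, r ≠ i → r ≠ j → F r = fun _ => (1:ℝ) := by
    intro r hri hrj
    rw [hFdef, Function.update_of_ne hrj, Function.update_of_ne hri]
  have hmem : j ∈ Finset.univ.erase i := Finset.mem_erase.2 ⟨hij.symm, Finset.mem_univ j⟩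
  have h1 : ∀ x : ι → α, φ (x i) * ψ (x j) = ∏ r, F r (x r) := by
    intro x
    rw [← Finset.mul_prod_erase Finset.univ (fun r => F r (x r)) (Finset.mem_univ i),
        ← Finset.mul_prod_erase _ (fun r => F r (x r)) hmem,
        Finset.prod_eq_one (fun r hr => by
          simp only [Finset.mem_erase] at hr
          rw [hFo r hr.2.1 hr.1]), hFi, hFj, mul_one]
  calc ∫ x : ι → α, φ (x i) * ψ (x j) ∂(Measure.pi fun _ : ι => μ)
      = ∫ x : ι → α, ∏ r, F r (x r) := by
        rw [hvol]; exact integral_congr_ae (Filter.Eventually.of_forall h1)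
    _ = ∏ r, ∫ y, F r y := integral_fintype_prod_eq_prod F
    _ = (∫ y, φ y ∂μ) * ∫ y, ψ y ∂μ := by
        rw [← Finset.mul_prod_erase Finset.univ (fun r => ∫ y, F r y) (Finset.mem_univ i),
            ← Finset.mul_prod_erase _ (fun r => ∫ y, F r y) hmem,
            Finset.prod_eq_one (fun r hr => by
              simp only [Finset.mem_erase] at hr
              rw [hFo r hr.2.1 hr.1]; simp), hFi, hFj, mul_one]
        rfl

lemma my_integrable_of_bdd {β : Type*} [MeasurableSpace β] {ν : Measure β} [IsFiniteMeasure ν]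
    {g : β → ℝ} (hg : Measurable g) (C : ℝ) (hC : ∀ x, |g x| ≤ C) : Integrable g ν :=
  ⟨hg.aestronglyMeasurable,
    HasFiniteIntegral.of_bounded (ae_of_all _ fun x => by simpa [Real.norm_eq_abs] using hC x)⟩

end AuxHelpers

lemma my_nCount_sum {K N : ℕ} (c : Fin N → Fin K) : ∑ i, nCount c i = N := by
  classical
  unfold nCount
  have := Finset.card_eq_sum_card_fiberwise (f := c) (s := Finset.univ) (t := Finset.univ)
    (fun t _ => Finset.mem_univ (c t))
  simpa using this.symm

lemma my_sum_sq_min (K N : ℕ) (hK : 1 ≤ K) (n m : Fin K → ℕ)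
    (hn : ∑ i, n i = N) (hm : ∑ i, m i = N)
    (hbal : ∀ i, n i = N / K ∨ n i = N ⌈/⌉ K) :
    ∑ i, (n i)^2 ≤ ∑ i, (m i)^2 := by
  have hKpos : 0 < K := hK
  have hcd : N ⌈/⌉ K = N / K ∨ N ⌈/⌉ K = N / K + 1 := by
    have h1 : N / K ≤ N ⌈/⌉ K := by
      rw [Nat.ceilDiv_eq_add_pred_div]
      exact Nat.div_le_div_right (by omega)
    have h2 : N ⌈/⌉ K ≤ N / K + 1 := by
      rw [Nat.ceilDiv_eq_add_pred_div]
      calc (N + K - 1) / K ≤ (N + K) / K := Nat.div_le_div_right (by omega)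
        _ = N / K + 1 := Nat.add_div_right N hKpos
    omega
  set q : ℤ := ((N / K : ℕ) : ℤ) with hq
  have hn' : ∀ i, ((n i : ℤ)) = q ∨ ((n i : ℤ)) = q + 1 := by
    intro i
    rcases hbal i with h | h
    · left; rw [h]
    · rcases hcd with h2 | h2
      · left; rw [h, h2]
      · right; rw [h, h2, hq]; push_cast; ring
  have sum_lin : ∀ (x : Fin K → ℕ), (∑ i, x i = N) →
      ∑ i, (q^2 + (2*q+1)*((x i : ℤ) - q)) = K*q^2 + (2*q+1)*((N:ℤ) - K*q) := by
    intro x hx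
    rw [Finset.sum_add_distrib, ← Finset.mul_sum, Finset.sum_sub_distrib]
    rw [Finset.sum_const, Finset.sum_const, Finset.card_univ, Fintype.card_fin]
    have : ∑ i, ((x i : ℤ)) = (N : ℤ) := by rw [← hx]; push_cast; rfl
    rw [this]
    ring
  have hcast : (∑ i, ((n i : ℤ))^2) ≤ ∑ i, ((m i : ℤ))^2 := by
    have h1 : ∑ i, ((n i : ℤ))^2 = ∑ i, (q^2 + (2*q+1)*((n i : ℤ) - q)) := by
      refine Finset.sum_congr rfl (fun i _ => ?_)
      rcases hn' i with h | h <;> rw [h] <;> ring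
    have h2 : ∑ i, (q^2 + (2*q+1)*((m i : ℤ) - q)) ≤ ∑ i, ((m i : ℤ))^2 := by
      refine Finset.sum_le_sum (fun i _ => ?_)
      set d : ℤ := (m i : ℤ) - q with hd
      have hdd : d ≤ d^2 := by
        rcases le_or_gt 1 d with h | h
        · nlinarith
        · have : d ≤ 0 := by omega
          nlinarith
      nlinarith
    rw [h1, sum_lin n hn, ← sum_lin m hm]
    exact h2
  zify
  push_cast at hcast ⊢
  exact hcast

lemma my_pair_count {K N : ℕ} (c : Fin N → Fin K) :
    ∑ s : Fin N, ∑ t : Fin N, (if c s = c t then (1:ℝ) else 0)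
      = ∑ i : Fin K, (nCount c i : ℝ)^2 := by
  classical
  have hcount : ∀ i : Fin K, ∑ s : Fin N, (if c s = i then (1:ℝ) else 0) = (nCount c i : ℝ) := by
    intro i
    rw [Finset.sum_boole]
    rfl
  have h1 : ∀ s t : Fin N, (if c s = c t then (1:ℝ) else 0)
      = ∑ i : Fin K, (if c s = i then (1:ℝ) else 0) * (if c t = i then (1:ℝ) else 0) := by
    intro s t
    symm
    rw [Finset.sum_eq_single (c t)]
    · by_cases h : c s = c t <;> simp [h]
    · intro i _ hi
      have : c t ≠ i := fun h => hi h.symm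
      simp [this]
    · simp
  calc ∑ s : Fin N, ∑ t : Fin N, (if c s = c t then (1:ℝ) else 0)
      = ∑ s : Fin N, ∑ t : Fin N, ∑ i : Fin K,
          (if c s = i then (1:ℝ) else 0) * (if c t = i then (1:ℝ) else 0) :=
        Finset.sum_congr rfl fun s _ => Finset.sum_congr rfl fun t _ => h1 s t
    _ = ∑ s : Fin N, ∑ i : Fin K, ∑ t : Fin N,
          (if c s = i then (1:ℝ) else 0) * (if c t = i then (1:ℝ) else 0) :=
        Finset.sum_congr rfl fun s _ => Finset.sum_comm
    _ = ∑ i : Fin K, ∑ s : Fin N, ∑ t : Fin N,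
          (if c s = i then (1:ℝ) else 0) * (if c t = i then (1:ℝ) else 0) := Finset.sum_comm
    _ = ∑ i : Fin K, (∑ s : Fin N, (if c s = i then (1:ℝ) else 0))
          * (∑ t : Fin N, (if c t = i then (1:ℝ) else 0)) := by
        refine Finset.sum_congr rfl fun i _ => ?_
        rw [Finset.sum_mul_sum]
    _ = ∑ i : Fin K, (nCount c i : ℝ)^2 := by
        refine Finset.sum_congr rfl fun i _ => ?_
        rw [hcount i, pow_two]

lemma my_sum_formula {K N : ℕ} (c : Fin N → Fin K) (Q A : ℝ) :
    ∑ s : Fin N, ∑ t : Fin N,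
        ((if s = t then Q - A else 0) + (if c s = c t then A else 0))
      = N * Q + A * ((∑ i : Fin K, (nCount c i : ℝ)^2) - N) := by
  classical
  have h2 : ∀ s t : Fin N, (if c s = c t then A else 0)
      = A * (if c s = c t then (1:ℝ) else 0) := by
    intro s t; by_cases h : c s = c t <;> simp [h]
  simp_rw [Finset.sum_add_distrib, h2, ← Finset.mul_sum]
  rw [my_pair_count c]
  have h3 : ∑ s : Fin N, ∑ t : Fin N, (if s = t then Q - A else 0) = N * (Q - A) := by
    have : ∀ s : Fin N, ∑ t : Fin N, (if s = t then Q - A else 0) = Q - A := by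
      intro s; rw [Finset.sum_ite_eq]; simp
    rw [Finset.sum_congr rfl fun s _ => this s, Finset.sum_const, Finset.card_univ,
      Fintype.card_fin, nsmul_eq_mul]
  rw [h3]
  ring

lemma my_key {Z V : Type*} [MeasurableSpace Z] [MeasurableSpace V]
    (D : Measure Z) (G : Measure V) [IsProbabilityMeasure D] [IsProbabilityMeasure G]
    (L U : ℝ) (hLU : L ≤ U) (f : Z × V → ℝ) (hf : Measurable f)
    (hbdd : ∀ z v, f (z, v) ∈ Set.Icc L U)
    (K N : ℕ) (c : Fin N → Fin K) :
    ∫ ω : (Fin K → Z) × (Fin N → V),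
        (∑ t : Fin N, (f (ω.1 (c t), ω.2 t) - truePerf D G f)) ^ 2
      ∂(sampleMeasure D G K N)
    = N * (∫ z, (∫ v, (f (z, v) - truePerf D G f) * (f (z, v) - truePerf D G f) ∂G) ∂D)
      + (∫ z, (∫ v, (f (z, v) - truePerf D G f) ∂G)
            * (∫ v, (f (z, v) - truePerf D G f) ∂G) ∂D)
        * ((∑ i : Fin K, (nCount c i : ℝ)^2) - N) := by
  classical
  set u : ℝ := truePerf D G f with hudef
  have hsm : sampleMeasure D G K N
      = (Measure.pi fun _ : Fin K => D).prod (Measure.pi fun _ : Fin N => G) := rfl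
  -- bounds
  have hbdd' : ∀ p : Z × V, f p ∈ Set.Icc L U := by
    intro p; have := hbdd p.1 p.2; simpa using this
  have hfi : Integrable f (D.prod G) := by
    refine my_integrable_of_bdd hf (max |L| |U|) (fun p => ?_)
    exact abs_le_max_abs_abs (hbdd' p).1 (hbdd' p).2
  have huL : L ≤ u := by
    have : ∫ _ : Z × V, L ∂(D.prod G) ≤ ∫ p, f p ∂(D.prod G) :=
      integral_mono (integrable_const L) hfi (fun p => (hbdd' p).1)
    simpa [truePerf, hudef] using this
  have huU : u ≤ U := by
    have : ∫ p, f p ∂(D.prod G) ≤ ∫ _ : Z × V, U ∂(D.prod G) :=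
      integral_mono hfi (integrable_const U) (fun p => (hbdd' p).2)
    simpa [truePerf, hudef] using this
  have hC : ∀ p : Z × V, |f p - u| ≤ U - L := by
    intro p
    have h1 := (hbdd' p).1
    have h2 := (hbdd' p).2
    rw [abs_le]
    constructor <;> linarith
  -- measurability and integrability of the summands
  have hgm : ∀ s : Fin N,
      Measurable (fun ω : (Fin K → Z) × (Fin N → V) => f (ω.1 (c s), ω.2 s) - u) :=
    fun s => (hf.comp (((measurable_pi_apply (c s)).comp measurable_fst).prodMk
      ((measurable_pi_apply s).comp measurable_snd))).sub measurable_const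
  have hint : ∀ s t : Fin N,
      Integrable (fun ω : (Fin K → Z) × (Fin N → V) =>
        (f (ω.1 (c s), ω.2 s) - u) * (f (ω.1 (c t), ω.2 t) - u)) ((Measure.pi fun _ : Fin K => D).prod (Measure.pi fun _ : Fin N => G)) := by
    intro s t
    refine my_integrable_of_bdd ((hgm s).mul (hgm t)) ((U - L) * (U - L)) (fun ω => ?_)
    rw [abs_mul]
    exact mul_le_mul (hC _) (hC _) (abs_nonneg _) (le_trans (abs_nonneg _) (hC (ω.1 (c s), ω.2 s)))
  -- the mean of z ↦ ∫ v, (f (z, v) - u) is zero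
  have hfz : ∀ z : Z, Integrable (fun v => f (z, v)) G := by
    intro z
    refine my_integrable_of_bdd (hf.comp measurable_prodMk_left) (max |L| |U|) (fun v => ?_)
    exact abs_le_max_abs_abs (hbdd z v).1 (hbdd z v).2
  have hIfm : Measurable (fun z => ∫ v, f (z, v) ∂G) :=
    hf.stronglyMeasurable.integral_prod_right'.measurable
  have hIf : Integrable (fun z => ∫ v, f (z, v) ∂G) D := by
    refine my_integrable_of_bdd hIfm (max |L| |U|) (fun z => ?_)
    have := norm_integral_le_of_norm_le_const (μ := G) (f := fun v => f (z, v))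
      (C := max |L| |U|)
      (ae_of_all _ fun v => by
        simpa [Real.norm_eq_abs] using abs_le_max_abs_abs (hbdd z v).1 (hbdd z v).2)
    simpa [Real.norm_eq_abs, measure_univ] using this
  have hM : ∫ z, (∫ v, (f (z, v) - u) ∂G) ∂D = 0 := by
    have hstep : ∀ z : Z, ∫ v, (f (z, v) - u) ∂G = (∫ v, f (z, v) ∂G) - u := by
      intro z
      rw [integral_sub (hfz z) (integrable_const u), integral_const, probReal_univ,
        smul_eq_mul, one_mul]
    rw [integral_congr_ae (Filter.Eventually.of_forall hstep),
      integral_sub hIf (integrable_const u), integral_const, probReal_univ,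
      smul_eq_mul, one_mul]
    have hFub : ∫ z, (∫ v, f (z, v) ∂G) ∂D = u := by
      rw [hudef]
      exact (integral_prod f hfi).symm
    rw [hFub, sub_self]
  -- the per-pair integrals
  have hEst : ∀ s t : Fin N,
      (∫ ω : (Fin K → Z) × (Fin N → V),
        (f (ω.1 (c s), ω.2 s) - u) * (f (ω.1 (c t), ω.2 t) - u) ∂((Measure.pi fun _ : Fin K => D).prod (Measure.pi fun _ : Fin N => G)))
      = (if s = t then
            (∫ z, (∫ v, (f (z, v) - u) * (f (z, v) - u) ∂G) ∂D)
            - (∫ z, (∫ v, (f (z, v) - u) ∂G) * (∫ v, (f (z, v) - u) ∂G) ∂D)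
          else 0)
        + (if c s = c t then
            (∫ z, (∫ v, (f (z, v) - u) ∂G) * (∫ v, (f (z, v) - u) ∂G) ∂D)
          else 0) := by
    intro s t
    rw [integral_prod _ (hint s t)]
    by_cases hst : s = t
    · subst hst
      calc (∫ x : Fin K → Z, ∫ y : Fin N → V,
              (f (x (c s), y s) - u) * (f (x (c s), y s) - u) ∂(Measure.pi fun _ : Fin N => G) ∂(Measure.pi fun _ : Fin K => D))
          = ∫ x : Fin K → Z,
              (fun w => ∫ v, (f (w, v) - u) * (f (w, v) - u) ∂G) (x (c s)) ∂(Measure.pi fun _ : Fin K => D) := by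
            refine integral_congr_ae (Filter.Eventually.of_forall fun x => ?_)
            exact my_integral_pi_eval G (fun v => (f (x (c s), v) - u) * (f (x (c s), v) - u)) s
        _ = ∫ z, (∫ v, (f (z, v) - u) * (f (z, v) - u) ∂G) ∂D :=
            my_integral_pi_eval D
              (fun w => ∫ v, (f (w, v) - u) * (f (w, v) - u) ∂G) (c s)
        _ = _ := by simp
    · by_cases hct : c s = c t
      · calc (∫ x : Fin K → Z, ∫ y : Fin N → V,
                (f (x (c s), y s) - u) * (f (x (c t), y t) - u) ∂(Measure.pi fun _ : Fin N => G) ∂(Measure.pi fun _ : Fin K => D))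
            = ∫ x : Fin K → Z,
                (fun w => (∫ v, (f (w, v) - u) ∂G) * (∫ v, (f (w, v) - u) ∂G)) (x (c s)) ∂(Measure.pi fun _ : Fin K => D) := by
              refine integral_congr_ae (Filter.Eventually.of_forall fun x => ?_)
              rw [← hct]
              exact my_integral_pi_eval_two G (fun v => f (x (c s), v) - u)
                (fun v => f (x (c s), v) - u) hst
          _ = ∫ z, (∫ v, (f (z, v) - u) ∂G) * (∫ v, (f (z, v) - u) ∂G) ∂D :=
              my_integral_pi_eval D
                (fun w => (∫ v, (f (w, v) - u) ∂G) * (∫ v, (f (w, v) - u) ∂G)) (c s)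
          _ = _ := by simp [hst, hct]
      · calc (∫ x : Fin K → Z, ∫ y : Fin N → V,
                (f (x (c s), y s) - u) * (f (x (c t), y t) - u) ∂(Measure.pi fun _ : Fin N => G) ∂(Measure.pi fun _ : Fin K => D))
            = ∫ x : Fin K → Z,
                (fun w => ∫ v, (f (w, v) - u) ∂G) (x (c s))
                  * (fun w => ∫ v, (f (w, v) - u) ∂G) (x (c t)) ∂(Measure.pi fun _ : Fin K => D) := by
              refine integral_congr_ae (Filter.Eventually.of_forall fun x => ?_)
              exact my_integral_pi_eval_two G (fun v => f (x (c s), v) - u)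
                (fun v => f (x (c t), v) - u) hst
          _ = (∫ z, (∫ v, (f (z, v) - u) ∂G) ∂D) * (∫ z, (∫ v, (f (z, v) - u) ∂G) ∂D) :=
              my_integral_pi_eval_two D (fun w => ∫ v, (f (w, v) - u) ∂G)
                (fun w => ∫ v, (f (w, v) - u) ∂G) hct
          _ = 0 := by rw [hM, mul_zero]
          _ = _ := by simp [hst, hct]
  rw [hsm]
  calc (∫ ω : (Fin K → Z) × (Fin N → V),
          (∑ t : Fin N, (f (ω.1 (c t), ω.2 t) - u)) ^ 2 ∂((Measure.pi fun _ : Fin K => D).prod (Measure.pi fun _ : Fin N => G)))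
      = ∫ ω : (Fin K → Z) × (Fin N → V),
          ∑ s : Fin N, ∑ t : Fin N,
            (f (ω.1 (c s), ω.2 s) - u) * (f (ω.1 (c t), ω.2 t) - u) ∂((Measure.pi fun _ : Fin K => D).prod (Measure.pi fun _ : Fin N => G)) := by
        refine integral_congr_ae (Filter.Eventually.of_forall fun ω => ?_)
        show (∑ t : Fin N, (f (ω.1 (c t), ω.2 t) - u)) ^ 2
          = ∑ s : Fin N, ∑ t : Fin N, (f (ω.1 (c s), ω.2 s) - u) * (f (ω.1 (c t), ω.2 t) - u)
        rw [pow_two, Finset.sum_mul_sum]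
    _ = ∑ s : Fin N, ∑ t : Fin N,
          ∫ ω : (Fin K → Z) × (Fin N → V),
            (f (ω.1 (c s), ω.2 s) - u) * (f (ω.1 (c t), ω.2 t) - u) ∂((Measure.pi fun _ : Fin K => D).prod (Measure.pi fun _ : Fin N => G)) := by
        rw [integral_finset_sum _ (fun s _ => integrable_finset_sum _ (fun t _ => hint s t))]
        exact Finset.sum_congr rfl fun s _ => integral_finset_sum _ (fun t _ => hint s t)
    _ = ∑ s : Fin N, ∑ t : Fin N,
          ((if s = t then
              (∫ z, (∫ v, (f (z, v) - u) * (f (z, v) - u) ∂G) ∂D)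
              - (∫ z, (∫ v, (f (z, v) - u) ∂G) * (∫ v, (f (z, v) - u) ∂G) ∂D)
            else 0)
          + (if c s = c t then
              (∫ z, (∫ v, (f (z, v) - u) ∂G) * (∫ v, (f (z, v) - u) ∂G) ∂D)
            else 0)) :=
        Finset.sum_congr rfl fun s _ => Finset.sum_congr rfl fun t _ => hEst s t
    _ = _ := my_sum_formula c _ _

/-- **The evenly-distributed experimental setting minimizes the variance.**
Among all choices of nonnegative integer run counts `n_1, …, n_K` with
`Σ n_i = N` (encoded via assignments of the `N` runs to the `K` instances),
the variance `E[(û_{S_N} − u)²]` of the (always unbiased) performance estimator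
is minimized by any choice satisfying `n_i ∈ {⌊N/K⌋, ⌈N/K⌉}` for all `i`. -/
theorem balanced_estimator_min_variance
    {Z V : Type*} [MeasurableSpace Z] [MeasurableSpace V]
    (D : Measure Z) (G : Measure V)
    [IsProbabilityMeasure D] [IsProbabilityMeasure G]
    (L U : ℝ) (hLU : L ≤ U)
    (f : Z × V → ℝ) (hf : Measurable f)
    (hbdd : ∀ z v, f (z, v) ∈ Set.Icc L U)
    (K N : ℕ) (hK : 1 ≤ K) (hN : 1 ≤ N)
    (a : Fin N → Fin K)
    (ha_bal : ∀ i, nCount a i = N / K ∨ nCount a i = N ⌈/⌉ K)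
    (b : Fin N → Fin K) :
    ∫ ω : (Fin K → Z) × (Fin N → V),
        ((1 / (N : ℝ)) * ∑ t : Fin N, f (ω.1 (a t), ω.2 t) - truePerf D G f) ^ 2
      ∂(sampleMeasure D G K N)
    ≤ ∫ ω : (Fin K → Z) × (Fin N → V),
        ((1 / (N : ℝ)) * ∑ t : Fin N, f (ω.1 (b t), ω.2 t) - truePerf D G f) ^ 2
      ∂(sampleMeasure D G K N) := by
  have hN0 : (N : ℝ) ≠ 0 := by
    exact Nat.cast_ne_zero.2 (by omega)
  have hrw : ∀ c : Fin N → Fin K,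
      (∫ ω : (Fin K → Z) × (Fin N → V),
          ((1 / (N : ℝ)) * ∑ t : Fin N, f (ω.1 (c t), ω.2 t) - truePerf D G f) ^ 2
        ∂(sampleMeasure D G K N))
      = (1 / (N : ℝ))^2 * ∫ ω : (Fin K → Z) × (Fin N → V),
          (∑ t : Fin N, (f (ω.1 (c t), ω.2 t) - truePerf D G f)) ^ 2
        ∂(sampleMeasure D G K N) := by
    intro c
    rw [← integral_const_mul]
    refine integral_congr_ae (Filter.Eventually.of_forall fun ω => ?_)
    have hbase : (1 / (N : ℝ)) * ∑ t : Fin N, f (ω.1 (c t), ω.2 t) - truePerf D G f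
        = (1 / (N : ℝ)) * ∑ t : Fin N, (f (ω.1 (c t), ω.2 t) - truePerf D G f) := by
      rw [Finset.sum_sub_distrib, Finset.sum_const, Finset.card_univ, Fintype.card_fin,
        nsmul_eq_mul]
      field_simp
    show ((1 / (N : ℝ)) * ∑ t : Fin N, f (ω.1 (c t), ω.2 t) - truePerf D G f) ^ 2
      = (1 / (N : ℝ))^2 * (∑ t : Fin N, (f (ω.1 (c t), ω.2 t) - truePerf D G f)) ^ 2
    rw [hbase, mul_pow]
  rw [hrw a, hrw b, my_key D G L U hLU f hf hbdd K N a, my_key D G L U hLU f hf hbdd K N b]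
  have hAv : 0 ≤ ∫ z, (∫ v, (f (z, v) - truePerf D G f) ∂G)
      * (∫ v, (f (z, v) - truePerf D G f) ∂G) ∂D :=
    integral_nonneg fun z => mul_self_nonneg _
  have hS : (∑ i : Fin K, (nCount a i : ℝ)^2) ≤ ∑ i : Fin K, (nCount b i : ℝ)^2 := by
    have := my_sum_sq_min K N hK (nCount a) (nCount b) (my_nCount_sum a) (my_nCount_sum b) ha_bal
    exact_mod_cast this
  have hsq : (0:ℝ) ≤ (1 / (N : ℝ))^2 := sq_nonneg _
  have hmul := mul_le_mul_of_nonneg_left (sub_le_sub_right hS (N:ℝ)) hAv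
  nlinarith [hmul, hsq, mul_le_mul_of_nonneg_left hmul hsq]
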